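/- Let n ≥ 1 and let F be a subfield of the cyclotomic field ℚ_n with ℚ ⊆ F. Then there exist a finite solvable group G and an irreducible character χ of G such that ℚ(χ) = F and χ(1) = [ℚ_n : F]. -/

import Mathlib

set_option linter.unusedSectionVars false
set_option maxHeartbeats 1000000
set_option synthInstance.maxHeartbeats 400000


open scoped BigOperators
open Matrix

/-- The `n`-th cyclotomic field `ℚ_n = ℚ(e^{2πi/n})`, as a subfield of `ℂ`. -/
noncomputable def cyclotomicField' (n : ℕ) : IntermediateField ℚ ℂ :=
  IntermediateField.adjoin ℚ {Complex.exp (2 * Real.pi * Complex.I / n)}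

/-- The field of values `ℚ(χ)` of the character `χ` of a complex representation `V`:
the subfield of `ℂ` generated over `ℚ` by all character values. -/
noncomputable def FDRep.fieldOfValues {G : Type} [Monoid G] (V : FDRep ℂ G) :
    IntermediateField ℚ ℂ :=
  IntermediateField.adjoin ℚ (Set.range V.character)

/-- The conductor of a subfield `F` of `ℂ` (contained in some cyclotomic field):
the least `n ≥ 1` with `F ⊆ ℚ_n`. -/
noncomputable def fieldConductor (F : IntermediateField ℚ ℂ) : ℕ :=
  sInf {n : ℕ | 0 < n ∧ F ≤ cyclotomicField' n}

/-- The relative degree `[E : F]` of abelian number fields inside `ℂ`.  For `F ≤ E`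
with `E` finite-dimensional over `ℚ` (the only case used below), this equals the
usual relative degree, by the tower law. -/
noncomputable def rdeg (F E : IntermediateField ℚ ℂ) : ℕ :=
  Module.finrank ℚ E / Module.finrank ℚ F

/-- Bundled data of an irreducible complex character: a finite group `carrier`
together with an irreducible (simple) finite-dimensional complex representation
`rep`; the character is `rep.character`, its degree `χ(1)` is `Module.finrank ℂ rep`. -/
structure IrrChar : Type 1 where
  carrier : Type
  [group : Group carrier]
  [finite : Finite carrier]
  rep : FDRep ℂ carrier
  simple : CategoryTheory.Simple rep

attribute [instance] IrrChar.group IrrChar.finite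


namespace Stmt12Aux


variable {n : ℕ} [NeZero n]

/-- `ee ζ a = ζ ^ a.val` for `a : ZMod n`. -/
noncomputable def ee (ζ : ℂ) (a : ZMod n) : ℂ := ζ ^ a.val

lemma pow_val_natCast' {M : Type*} [Monoid M] {ζ : M} (h1 : ζ ^ n = 1) (k : ℕ) :
    ζ ^ ((k : ZMod n)).val = ζ ^ k := by
  conv_rhs => rw [← Nat.div_add_mod k n]
  rw [pow_add, pow_mul, h1, one_pow, one_mul, ZMod.val_natCast]

lemma ee_add {ζ : ℂ} (h1 : ζ ^ n = 1) (a b : ZMod n) : ee ζ (a + b) = ee ζ a * ee ζ b := by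
  have : ((a.val + b.val : ℕ) : ZMod n) = a + b := by simp [ZMod.natCast_val, ZMod.cast_id]
  rw [ee, ← this, pow_val_natCast' h1, pow_add]; rfl

lemma ee_mul {ζ : ℂ} (h1 : ζ ^ n = 1) (a b : ZMod n) : ee ζ (a * b) = (ζ ^ a.val) ^ b.val := by
  have : ((a.val * b.val : ℕ) : ZMod n) = a * b := by simp [ZMod.natCast_val, ZMod.cast_id]
  rw [ee, ← this, pow_val_natCast' h1, pow_mul]

lemma ee_zero (ζ : ℂ) : ee (n := n) ζ 0 = 1 := by simp [ee]

lemma sum_zmod {β : Type*} [AddCommMonoid β] (f : ℕ → β) :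
    ∑ a : ZMod n, f a.val = ∑ i ∈ Finset.range n, f i := by
  apply Finset.sum_bij' (fun (a : ZMod n) _ => a.val) (fun (i : ℕ) _ => (i : ZMod n))
  · intro a _; exact Finset.mem_range.2 (ZMod.val_lt a)
  · intro i _; exact Finset.mem_univ _
  · intro a _; exact ZMod.natCast_rightInverse a
  · intro i hi; exact ZMod.val_cast_of_lt (Finset.mem_range.1 hi)
  · intro a _; rfl

lemma sum_ee {ζ : ℂ} (hζ : IsPrimitiveRoot ζ n) {m : ZMod n} (hm : m ≠ 0) :
    ∑ a : ZMod n, ee ζ (m * a) = 0 := by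
  have h1 : ζ ^ n = 1 := hζ.pow_eq_one
  have hxi : ζ ^ m.val ≠ 1 := by
    intro h
    have hdvd := (hζ.pow_eq_one_iff_dvd m.val).1 h
    have hlt : m.val < n := ZMod.val_lt m
    have hne : m.val ≠ 0 := fun hv => hm ((ZMod.val_eq_zero m).1 hv)
    exact absurd (Nat.le_of_dvd (Nat.pos_of_ne_zero hne) hdvd) (not_le.2 hlt)
  calc ∑ a : ZMod n, ee ζ (m * a) = ∑ a : ZMod n, (ζ ^ m.val) ^ a.val := by
        refine Finset.sum_congr rfl fun a _ => ee_mul h1 m a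
    _ = ∑ i ∈ Finset.range n, (ζ ^ m.val) ^ i := sum_zmod _
    _ = 0 := by
        rw [geom_sum_eq hxi]
        have : (ζ ^ m.val) ^ n = 1 := by rw [← pow_mul, mul_comm, pow_mul, h1, one_pow]
        rw [this, sub_self, zero_div]

variable {H : Type} [Group H]

/-- The action of `H` on `Multiplicative (ZMod n)` through `t : H →* (ZMod n)ˣ`. -/
def php (t : H →* (ZMod n)ˣ) : H →* MulAut (Multiplicative (ZMod n)) where
  toFun τ := AddEquiv.toMultiplicative (DistribMulAction.toAddAut (ZMod n)ˣ (ZMod n) (t τ))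
  map_one' := by ext x; simp
  map_mul' a b := by ext x; simp [mul_smul]

lemma toAdd_php_apply (t : H →* (ZMod n)ˣ) (τ : H) (x : Multiplicative (ZMod n)) :
    Multiplicative.toAdd (php t τ x) = (t τ : ZMod n) * Multiplicative.toAdd x := by
  simp [php, Units.smul_def]

/-- The semidirect product `(ZMod n) ⋊ H`. -/
abbrev Gp (t : H →* (ZMod n)ˣ) : Type := Multiplicative (ZMod n) ⋊[php t] H

instance (t : H →* (ZMod n)ˣ) [Finite H] : Finite (Gp t) :=
  Finite.of_equiv (Multiplicative (ZMod n) × H)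
    ⟨fun p => ⟨p.1, p.2⟩, fun g => (g.left, g.right), fun _ => rfl, fun _ => rfl⟩

lemma solvable_Gp (t : H →* (ZMod n)ˣ) (ht : Function.Injective t) : IsSolvable (Gp t) := by
  haveI : Group.IsSolvable H := solvable_of_solvable_injective ht
  exact solvable_of_ker_le_range (SemidirectProduct.inl (φ := php t))
    (SemidirectProduct.rightHom) (le_of_eq (SemidirectProduct.range_inl_eq_ker_rightHom).symm)

variable [Fintype H] [DecidableEq H]

/-- The monomial representation of `Gp t` on `H → ℂ`. -/
noncomputable def rho (ζ : ℂ) (h1 : ζ ^ n = 1) (t : H →* (ZMod n)ˣ) :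
    Representation ℂ (Gp t) (H → ℂ) where
  toFun g :=
    { toFun := fun f τ => ee ζ ((t τ : ZMod n) * Multiplicative.toAdd g.left) * f (τ * g.right)
      map_add' := fun f₁ f₂ => by funext τ; simp [mul_add]
      map_smul' := fun c f => by funext τ; simp [smul_eq_mul]; ring }
  map_one' := by
    refine LinearMap.ext fun f => funext fun τ => ?_
    simp [ee_zero]
  map_mul' g g' := by
    refine LinearMap.ext fun f => funext fun τ => ?_
    simp only [LinearMap.coe_mk, AddHom.coe_mk, Module.End.mul_apply, SemidirectProduct.mul_left,
      SemidirectProduct.mul_right, toAdd_mul, toAdd_php_apply, Function.comp_apply]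
    rw [mul_add, ee_add h1, ← mul_assoc (t τ : ZMod n), ← Units.val_mul, ← map_mul t]
    rw [map_mul t, Units.val_mul, mul_assoc (t τ : ZMod n), mul_assoc τ, mul_assoc]

lemma rho_apply (ζ : ℂ) (h1 : ζ ^ n = 1) (t : H →* (ZMod n)ˣ) (g : Gp t) (f : H → ℂ) (τ : H) :
    rho ζ h1 t g f τ = ee ζ ((t τ : ZMod n) * Multiplicative.toAdd g.left) * f (τ * g.right) := rfl

/-- The character of `rho`. -/
lemma character_rho (ζ : ℂ) (h1 : ζ ^ n = 1) (t : H →* (ZMod n)ˣ) (g : Gp t) :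
    (FDRep.of (rho ζ h1 t)).character g =
      if g.right = 1 then ∑ τ : H, ee ζ ((t τ : ZMod n) * Multiplicative.toAdd g.left) else 0 := by
  have : (FDRep.of (rho ζ h1 t)).character g = LinearMap.trace ℂ (H → ℂ) (rho ζ h1 t g) := rfl
  rw [this, LinearMap.trace_eq_matrix_trace ℂ (Pi.basisFun ℂ H), Matrix.trace]
  have hentry : ∀ τ : H, LinearMap.toMatrix (Pi.basisFun ℂ H) (Pi.basisFun ℂ H) (rho ζ h1 t g) τ τ
      = ee ζ ((t τ : ZMod n) * Multiplicative.toAdd g.left) * (if τ * g.right = τ then 1 else 0) := by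
    intro τ
    rw [LinearMap.toMatrix_apply]
    simp only [Pi.basisFun_repr, Pi.basisFun_apply]
    rw [rho_apply]
    congr 1
    simp [Pi.single_apply]
  simp only [Matrix.diag_apply, hentry]
  by_cases hg : g.right = 1
  · simp [hg]
  · rw [if_neg hg]
    apply Finset.sum_eq_zero
    intro τ _
    rw [if_neg, mul_zero]
    intro h
    exact hg (by simpa using h)

section Simplicity

variable {ζ : ℂ} (hζ : IsPrimitiveRoot ζ n) (t : H →* (ZMod n)ˣ)

lemma invariant_submodule (ht : Function.Injective t) (W : Submodule ℂ (H → ℂ))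
    (hW : ∀ (g : Gp t) (f : H → ℂ), f ∈ W → rho ζ hζ.pow_eq_one t g f ∈ W) :
    W = ⊥ ∨ W = ⊤ := by
  by_cases hbot : W = ⊥
  · exact Or.inl hbot
  right
  -- get a nonzero element
  obtain ⟨f, hfW, hf0⟩ := Submodule.exists_mem_ne_zero_of_ne_bot hbot
  obtain ⟨τ₀, hτ₀⟩ : ∃ τ₀, f τ₀ ≠ 0 := by
    by_contra h
    push_neg at h
    exact hf0 (funext h)
  -- single τ₀ 1 ∈ W
  have hsingle : ∀ τ₀, f τ₀ ≠ 0 → (Pi.single τ₀ 1 : H → ℂ) ∈ W := by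
    intro τ₀ hτ₀
    set u : H → ℂ := ∑ a : ZMod n,
      ee ζ (-((t τ₀ : ZMod n) * a)) • rho ζ hζ.pow_eq_one t (SemidirectProduct.inl (Multiplicative.ofAdd a)) f with hu
    have huW : u ∈ W := Submodule.sum_mem _ fun a _ => Submodule.smul_mem _ _ (hW _ _ hfW)
    have hu_eq : u = ((n : ℂ) * f τ₀) • (Pi.single τ₀ 1 : H → ℂ) := by
      funext τ
      have : u τ = (∑ a : ZMod n, ee ζ (((t τ : ZMod n) - (t τ₀ : ZMod n)) * a)) * f τ := by
        rw [hu]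
        simp only [Finset.sum_apply, Pi.smul_apply, smul_eq_mul, Finset.sum_mul]
        refine Finset.sum_congr rfl fun a _ => ?_
        rw [rho_apply]
        simp only [SemidirectProduct.left_inl, SemidirectProduct.right_inl, mul_one, toAdd_ofAdd]
        rw [← mul_assoc, ← ee_add hζ.pow_eq_one]
        congr 2
        ring
      rw [this]
      by_cases hττ₀ : τ = τ₀
      · subst hττ₀
        simp only [sub_self, zero_mul, ee_zero, Finset.sum_const, Finset.card_univ,
          ZMod.card, nsmul_eq_mul, mul_one]
        simp [Pi.single_apply]
      · have hne : (t τ : ZMod n) - (t τ₀ : ZMod n) ≠ 0 := by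
          intro h
          apply hττ₀
          apply ht
          exact Units.ext (by linear_combination (norm := ring_nf) h)
        rw [sum_ee hζ hne, zero_mul]
        simp [Pi.single_apply, Ne.symm hττ₀]
    have hc : ((n : ℂ) * f τ₀) ≠ 0 := by
      apply mul_ne_zero _ hτ₀
      exact_mod_cast Nat.cast_ne_zero.2 (NeZero.ne n)
    have := Submodule.smul_mem W ((n : ℂ) * f τ₀)⁻¹ (hu_eq ▸ huW)
    rwa [inv_smul_smul₀ hc] at this
  have hsingleτ₀ := hsingle τ₀ hτ₀
  -- all singles are in W
  have hall : ∀ τ₁ : H, (Pi.single τ₁ 1 : H → ℂ) ∈ W := by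
    intro τ₁
    have := hW (SemidirectProduct.inr (τ₁⁻¹ * τ₀)) _ hsingleτ₀
    have heq : rho ζ hζ.pow_eq_one t (SemidirectProduct.inr (τ₁⁻¹ * τ₀)) (Pi.single τ₀ (1:ℂ))
        = (Pi.single τ₁ 1 : H → ℂ) := by
      funext τ
      rw [rho_apply]
      simp only [SemidirectProduct.left_inr, SemidirectProduct.right_inr, toAdd_one, mul_zero,
        ee_zero, one_mul]
      rw [Pi.single_apply, Pi.single_apply]
      have hkey : τ₀ * (τ₁⁻¹ * τ₀)⁻¹ = τ₁ := by group
      have hiff : (τ * (τ₁⁻¹ * τ₀) = τ₀) ↔ (τ = τ₁) := by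
        rw [← eq_mul_inv_iff_mul_eq, hkey]
      simp only [hiff]
    rwa [heq] at this
  -- conclude
  rw [Submodule.eq_top_iff']
  intro v
  have : v = ∑ τ : H, v τ • (Pi.single τ 1 : H → ℂ) := by
    funext τ'
    simp [Pi.single_apply]
  rw [this]
  exact Submodule.sum_mem _ fun τ _ => Submodule.smul_mem _ _ (hall τ)

end Simplicity
open CategoryTheory

theorem simple_rho {ζ : ℂ} (hζ : IsPrimitiveRoot ζ n) (t : H →* (ZMod n)ˣ)
    (ht : Function.Injective t) : Simple (FDRep.of (rho ζ hζ.pow_eq_one t)) := by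
  set X := FDRep.of (rho ζ hζ.pow_eq_one t) with hX
  constructor
  intro Y f hmono
  constructor
  · intro hiso hf0
    have h1 : 𝟙 X = (0 : X ⟶ X) := by
      calc 𝟙 X = CategoryTheory.inv f ≫ f := (IsIso.inv_hom_id f).symm
        _ = CategoryTheory.inv f ≫ (0 : Y ⟶ X) := congrArg (fun g => CategoryTheory.inv f ≫ g) hf0
        _ = 0 := Limits.comp_zero
    have h2 : (𝟙 X.V : X.V ⟶ X.V) = 0 := congrArg Action.Hom.hom h1
    have h3 : (fun (_ : H) => (1 : ℂ)) 1 = (0 : H → ℂ) 1 :=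
      congrArg (fun (ψ : X.V ⟶ X.V) => (ψ (fun _ => (1 : ℂ))) 1) h2
    have h4 : (1 : ℂ) = 0 := h3
    exact one_ne_zero h4
  · intro hf0
    -- the range of f.hom is an invariant submodule
    have hcomm : ∀ (g : Gp t) (v : Y.V), f.hom (Y.ρ g v) = rho ζ hζ.pow_eq_one t g (f.hom v) := by
      intro g v
      have := congrArg (fun (ψ : Y.V ⟶ X.V) => ψ v) (f.comm g)
      exact this
    have hWinv : ∀ (g : Gp t) (w : H → ℂ), w ∈ LinearMap.range (ConcreteCategory.hom f.hom : Y.V →ₗ[ℂ] (H → ℂ)) →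
        rho ζ hζ.pow_eq_one t g w ∈ LinearMap.range (ConcreteCategory.hom f.hom : Y.V →ₗ[ℂ] (H → ℂ)) := by
      rintro g w ⟨v, rfl⟩
      exact ⟨Y.ρ g v, hcomm g v⟩
    have hne : LinearMap.range (ConcreteCategory.hom f.hom : Y.V →ₗ[ℂ] (H → ℂ)) ≠ ⊥ := by
      intro h
      apply hf0
      apply Action.Hom.ext
      refine ConcreteCategory.hom_ext _ _ ?_
      intro v
      have : f.hom v ∈ LinearMap.range (ConcreteCategory.hom f.hom : Y.V →ₗ[ℂ] (H → ℂ)) := ⟨v, rfl⟩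
      rw [h] at this
      exact (Submodule.mem_bot ℂ).1 this
    have hsurj : Function.Surjective (ConcreteCategory.hom f.hom : Y.V →ₗ[ℂ] (H → ℂ)) := by
      rw [← LinearMap.range_eq_top]
      rcases invariant_submodule hζ t ht _ hWinv with h | h
      · exact absurd h hne
      · exact h
    have hinj : Function.Injective (ConcreteCategory.hom f.hom : Y.V →ₗ[ℂ] (H → ℂ)) := by
      haveI : Mono ((Action.forget (FGModuleCat ℂ) (MonCat.of (Gp t))).map f) :=
        Functor.map_mono _ f
      haveI : Mono ((forget₂ (FGModuleCat ℂ) (ModuleCat ℂ)).map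
          ((Action.forget (FGModuleCat ℂ) (MonCat.of (Gp t))).map f)) :=
        Functor.map_mono _ _
      exact (ModuleCat.mono_iff_injective _).1 this
    set e : Y.V ≃ₗ[ℂ] (H → ℂ) :=
      LinearEquiv.ofBijective (ConcreteCategory.hom f.hom : Y.V →ₗ[ℂ] (H → ℂ)) ⟨hinj, hsurj⟩ with he
    refine ⟨⟨⟨(ConcreteCategory.ofHom (e.symm : (H → ℂ) →ₗ[ℂ] Y.V) : X.V ⟶ Y.V), ?_⟩, ?_, ?_⟩⟩
    · intro g
      refine ConcreteCategory.hom_ext _ _ ?_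
      intro w
      show e.symm (X.ρ g w) = Y.ρ g (e.symm w)
      apply hinj
      show f.hom (e.symm (X.ρ g w)) = f.hom (Y.ρ g (e.symm w))
      have h1 : f.hom (e.symm (X.ρ g w)) = X.ρ g w := e.apply_symm_apply _
      have h2 : f.hom (Y.ρ g (e.symm w)) = rho ζ hζ.pow_eq_one t g (f.hom (e.symm w)) :=
        hcomm g (e.symm w)
      have h3 : f.hom (e.symm w) = w := e.apply_symm_apply w
      rw [h1, h2, h3]
      rfl
    · apply Action.Hom.ext
      refine ConcreteCategory.hom_ext _ _ ?_
      intro v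
      exact e.symm_apply_apply v
    · apply Action.Hom.ext
      refine ConcreteCategory.hom_ext _ _ ?_
      intro w
      exact e.apply_symm_apply w



variable (n : ℕ) [NeZero n]

def np : ℕ+ := ⟨n, Nat.pos_of_ne_zero (NeZero.ne n)⟩

lemma np_coe : ((np n : ℕ+) : ℕ) = n := rfl

noncomputable def zetaC : ℂ := Complex.exp (2 * Real.pi * Complex.I / n)

lemma hzetaC : IsPrimitiveRoot (zetaC n) n := Complex.isPrimitiveRoot_exp n (NeZero.ne n)

lemma hzetaC' : IsPrimitiveRoot (zetaC n) ((np n : ℕ+) : ℕ) := hzetaC n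

lemma zetaC_mem : zetaC n ∈ cyclotomicField' n :=
  IntermediateField.subset_adjoin ℚ _ rfl

noncomputable def zetaK : cyclotomicField' n := ⟨zetaC n, zetaC_mem n⟩

lemma hzetaK : IsPrimitiveRoot (zetaK n) n := by
  rw [← IsPrimitiveRoot.coe_submonoidClass_iff]
  exact hzetaC n

lemma hzetaK' : IsPrimitiveRoot (zetaK n) ((np n : ℕ+) : ℕ) := hzetaK n

lemma toSubalgebra_eq : (cyclotomicField' n).toSubalgebra = Algebra.adjoin ℚ {zetaC n} := by
  apply IntermediateField.adjoin_toSubalgebra_of_isAlgebraic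
  rintro x rfl
  exact (((hzetaC n).isIntegral (Nat.pos_of_ne_zero (NeZero.ne n))).tower_top).isAlgebraic

instance cycExt : IsCyclotomicExtension {(np n : ℕ)} ℚ (cyclotomicField' n) := by
  have h1 : IsCyclotomicExtension {(np n : ℕ)} ℚ (Algebra.adjoin ℚ ({zetaC n} : Set ℂ)) :=
    IsPrimitiveRoot.adjoin_isCyclotomicExtension ℚ (hzetaC' n)
  have e : (Algebra.adjoin ℚ ({zetaC n} : Set ℂ)) ≃ₐ[ℚ] (cyclotomicField' n) :=
    (Subalgebra.equivOfEq _ _ (toSubalgebra_eq n).symm)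
  exact IsCyclotomicExtension.equiv _ _ _ e

instance : FiniteDimensional ℚ (cyclotomicField' n) :=
  IsCyclotomicExtension.finiteDimensional {(np n : ℕ)} ℚ _

instance : IsGalois ℚ (cyclotomicField' n) :=
  IsCyclotomicExtension.isGalois {(np n : ℕ)} ℚ _

noncomputable def tmap : ((cyclotomicField' n) ≃ₐ[ℚ] (cyclotomicField' n)) →* (ZMod n)ˣ :=
  (hzetaK n).autToPow ℚ

lemma tmap_injective : Function.Injective (tmap n) :=
  IsPrimitiveRoot.autToPow_injective ℚ (hzetaK' n)

lemma tmap_spec (σ : (cyclotomicField' n) ≃ₐ[ℚ] (cyclotomicField' n)) :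
    (zetaK n) ^ ((tmap n σ : ZMod n)).val = σ (zetaK n) :=
  IsPrimitiveRoot.autToPow_spec ℚ (hzetaK n) σ

lemma adjoin_zetaK_eq_top : Algebra.adjoin ℚ ({zetaK n} : Set (cyclotomicField' n)) = ⊤ :=
  IsCyclotomicExtension.adjoin_primitive_root_eq_top (hzetaK' n)

variable (n : ℕ) [NeZero n]

variable (F : IntermediateField ℚ ℂ) (hF : F ≤ cyclotomicField' n)

local notation "K" => cyclotomicField' n

/-- `F` viewed as an intermediate field of `ℚ_n/ℚ`. -/
noncomputable def Fk : IntermediateField ℚ K := IntermediateField.restrict hF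

lemma mem_Fk_iff (y : K) : y ∈ Fk n F hF ↔ (y : ℂ) ∈ F :=
  IntermediateField.mem_restrict hF y

/-- The Galois group of `ℚ_n/F`. -/
noncomputable def Hgrp : Subgroup (K ≃ₐ[ℚ] K) :=
  IntermediateField.fixingSubgroup (Fk n F hF)

lemma fixedField_Hgrp : IntermediateField.fixedField (Hgrp n F hF) = Fk n F hF :=
  IsGalois.fixedField_fixingSubgroup _

noncomputable instance : Fintype ↥(Hgrp n F hF) := Fintype.ofFinite _

lemma finiteDimensional_F {F E : IntermediateField ℚ ℂ} (hFE : F ≤ E)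
    [FiniteDimensional ℚ ↥E] : FiniteDimensional ℚ ↥F :=
  FiniteDimensional.of_injective (IntermediateField.inclusion hFE).toLinearMap
    (IntermediateField.inclusion hFE).injective

lemma finrank_F_eq : Module.finrank ℚ ↥F = Module.finrank ℚ ↥(Fk n F hF) :=
  (IntermediateField.restrict_algEquiv hF).toLinearEquiv.finrank_eq

lemma card_Hgrp : Nat.card ↥(Hgrp n F hF) = Module.finrank ↥(Fk n F hF) ↥K := by
  classical
  have h1 := IsGalois.card_fixingSubgroup_eq_finrank (Fk n F hF)
  rw [← h1]
  rfl

lemma rdeg_eq :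
    Module.finrank ℚ ↥K / Module.finrank ℚ ↥F = Nat.card ↥(Hgrp n F hF) := by
  haveI := finiteDimensional_F hF
  rw [card_Hgrp, finrank_F_eq n F hF]
  have htower : Module.finrank ℚ ↥(Fk n F hF) * Module.finrank ↥(Fk n F hF) ↥K
      = Module.finrank ℚ ↥K := Module.finrank_mul_finrank ℚ ↥(Fk n F hF) ↥K
  rw [← htower, Nat.mul_div_cancel_left]
  exact Module.finrank_pos

/-- The trace-like sums. -/
noncomputable def strc (a : ZMod n) : K :=
  ∑ τ : ↥(Hgrp n F hF), (τ : K ≃ₐ[ℚ] K) ((zetaK n) ^ a.val)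

lemma bridge (τ : ↥(Hgrp n F hF)) (a : ZMod n) :
    ee (zetaC n) ((tmap n (τ : K ≃ₐ[ℚ] K) : ZMod n) * a)
      = (((τ : K ≃ₐ[ℚ] K) ((zetaK n) ^ a.val) : K) : ℂ) := by
  rw [map_pow, ← tmap_spec n (τ : K ≃ₐ[ℚ] K), ← pow_mul, ee_mul (hzetaC n).pow_eq_one]
  push_cast
  rw [pow_mul]
  rfl

lemma strc_mem (a : ZMod n) : strc n F hF a ∈ Fk n F hF := by
  rw [← fixedField_Hgrp n F hF]
  intro g
  show g • strc n F hF a = strc n F hF a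
  have : g • strc n F hF a = ∑ τ : ↥(Hgrp n F hF),
      ((g * τ : ↥(Hgrp n F hF)) : K ≃ₐ[ℚ] K) ((zetaK n) ^ a.val) := by
    rw [strc, Finset.smul_sum]
    rfl
  rw [this, strc]
  exact Fintype.sum_equiv (Equiv.mulLeft g) _ _ (fun τ => rfl)

lemma val_strc_mem (a : ZMod n) : ((strc n F hF a : K) : ℂ) ∈ F := by
  have := strc_mem n F hF a
  rw [mem_Fk_iff] at this
  exact this

/-- span of the powers of `ζ` is everything -/
lemma span_pow_zetaK :
    Submodule.span ℚ (Set.range fun k : ℕ => (zetaK n) ^ k) = ⊤ := by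
  have h1 : Algebra.adjoin ℚ ({zetaK n} : Set K) = ⊤ := adjoin_zetaK_eq_top n
  have h2 := Algebra.adjoin_eq_span ℚ ({zetaK n} : Set K)
  have h3 : (Submonoid.closure ({zetaK n} : Set K) : Set K)
      = Set.range fun k : ℕ => (zetaK n) ^ k := by
    ext x
    simp [Submonoid.mem_closure_singleton, eq_comm]
  rw [h1] at h2
  rw [← h3, ← h2, Algebra.top_toSubmodule]

/-- The natural injection from automorphisms to monoid homs. -/
noncomputable def iota : (K ≃ₐ[ℚ] K) → (K →* K) := fun σ => ((σ : K ≃* K) : K →* K)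

lemma iota_apply (σ : K ≃ₐ[ℚ] K) (x : K) : iota n σ x = σ x := rfl

lemma iota_injective : Function.Injective (iota n) := by
  intro σ σ' h
  apply AlgEquiv.ext
  intro x
  have := congrArg (fun m : (K →* K) => m x) h
  exact this

lemma fixing_le_Hgrp (g : K ≃ₐ[ℚ] K)
    (hg : ∀ a : ZMod n, g (strc n F hF a) = strc n F hF a) : g ∈ Hgrp n F hF := by
  classical
  -- Step A : the two sums of automorphisms agree as linear maps
  have hL : ∀ x : K, ∑ τ : ↥(Hgrp n F hF), (g * (τ : K ≃ₐ[ℚ] K)) x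
      = ∑ τ : ↥(Hgrp n F hF), (τ : K ≃ₐ[ℚ] K) x := by
    have hspan := span_pow_zetaK n
    set L1 : K →ₗ[ℚ] K := ∑ τ : ↥(Hgrp n F hF), (g * (τ : K ≃ₐ[ℚ] K)).toLinearMap with hL1
    set L2 : K →ₗ[ℚ] K := ∑ τ : ↥(Hgrp n F hF), (τ : K ≃ₐ[ℚ] K).toLinearMap with hL2
    have heq : Set.EqOn L1 L2 (Set.range fun k : ℕ => (zetaK n) ^ k) := by
      rintro x ⟨k, rfl⟩
      have hzpow : (zetaK n) ^ k = (zetaK n) ^ ((k : ZMod n)).val :=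
        (pow_val_natCast' (hzetaK n).pow_eq_one k).symm
      have hA : L1 ((zetaK n) ^ k) = g (strc n F hF ((k : ZMod n))) := by
        rw [hL1, strc, map_sum]
        simp only [LinearMap.coe_sum, Finset.sum_apply, AlgEquiv.toLinearMap_apply,
          AlgEquiv.mul_apply]
        rw [hzpow]
      have hB : L2 ((zetaK n) ^ k) = strc n F hF ((k : ZMod n)) := by
        rw [hL2, strc]
        simp only [LinearMap.coe_sum, Finset.sum_apply, AlgEquiv.toLinearMap_apply]
        rw [hzpow]
      rw [hA, hB, hg]
    have : L1 = L2 := by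
      apply LinearMap.ext
      intro x
      have hx : x ∈ Submodule.span ℚ (Set.range fun k : ℕ => (zetaK n) ^ k) := by
        rw [hspan]; trivial
      exact LinearMap.eqOn_span heq hx
    intro x
    have := congrArg (fun (L : K →ₗ[ℚ] K) => L x) this
    simpa only [hL1, hL2, LinearMap.coe_sum, Finset.sum_apply,
      AlgEquiv.toLinearMap_apply] using this
  -- Step B : linear independence of monoid homomorphisms
  set A : Finset (K →* K) := Finset.univ.image (fun τ : ↥(Hgrp n F hF) => iota n (τ : K ≃ₐ[ℚ] K))
    with hA
  set B : Finset (K →* K) :=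
    Finset.univ.image (fun τ : ↥(Hgrp n F hF) => iota n (g * (τ : K ≃ₐ[ℚ] K))) with hB
  have hinjA : Function.Injective (fun τ : ↥(Hgrp n F hF) => iota n (τ : K ≃ₐ[ℚ] K)) := by
    intro a b h
    exact Subtype.ext (iota_injective n h)
  have hinjB : Function.Injective
      (fun τ : ↥(Hgrp n F hF) => iota n (g * (τ : K ≃ₐ[ℚ] K))) := by
    intro a b h
    exact Subtype.ext (mul_left_cancel (iota_injective n h))
  have hsums : ∑ m ∈ A, (m : K → K) = ∑ m ∈ B, (m : K → K) := by
    rw [hA, hB, Finset.sum_image (fun a _ b _ h => hinjA h),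
      Finset.sum_image (fun a _ b _ h => hinjB h)]
    funext x
    simp only [Finset.sum_apply]
    exact (hL x).symm
  have hli := linearIndependent_monoidHom K K
  rw [linearIndependent_iff'] at hli
  have hcoef := hli (A ∪ B)
    (fun m => (if m ∈ A then (1:K) else 0) - (if m ∈ B then (1:K) else 0)) ?_
  · -- extract : iota g ∈ B, so coefficient zero forces iota g ∈ A
    have hgB : iota n g ∈ B := by
      rw [hB]
      refine Finset.mem_image.2 ⟨1, Finset.mem_univ _, ?_⟩
      simp
    have := hcoef (iota n g) (Finset.mem_union_right _ hgB)
    rw [if_pos hgB] at this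
    have hgA : iota n g ∈ A := by
      by_contra hgA
      rw [if_neg hgA] at this
      simp at this
    rw [hA] at hgA
    obtain ⟨τ, _, hτ⟩ := Finset.mem_image.1 hgA
    have : (τ : K ≃ₐ[ℚ] K) = g := iota_injective n hτ
    rw [← this]
    exact τ.2
  · -- the linear combination vanishes
    simp only [sub_smul, ite_smul, one_smul, zero_smul]
    rw [Finset.sum_sub_distrib, Finset.sum_ite_mem, Finset.sum_ite_mem,
      Finset.union_inter_cancel_left, Finset.union_inter_cancel_right, hsums, sub_self]

lemma adjoin_strc_eq :
    IntermediateField.adjoin ℚ (Set.range (strc n F hF)) = Fk n F hF := by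
  apply le_antisymm
  · rw [IntermediateField.adjoin_le_iff]
    rintro x ⟨a, rfl⟩
    exact strc_mem n F hF a
  · set E := IntermediateField.adjoin ℚ (Set.range (strc n F hF)) with hE
    have hEH : E.fixingSubgroup ≤ Hgrp n F hF := by
      intro g hg
      apply fixing_le_Hgrp
      intro a
      have hmem : strc n F hF a ∈ E := IntermediateField.subset_adjoin _ _ ⟨a, rfl⟩
      exact (IntermediateField.mem_fixingSubgroup_iff E g).1 hg _ hmem
    have h1 : IntermediateField.fixedField (Hgrp n F hF)
        ≤ IntermediateField.fixedField E.fixingSubgroup := by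
      intro x hx g
      exact hx ⟨g.1, hEH g.2⟩
    calc Fk n F hF = IntermediateField.fixedField (Hgrp n F hF) := (fixedField_Hgrp n F hF).symm
      _ ≤ IntermediateField.fixedField E.fixingSubgroup := h1
      _ = E := IsGalois.fixedField_fixingSubgroup E


end Stmt12Aux

open Stmt12Aux in
/-- Lemma 2.3.  For `ℚ ⊆ F ⊆ ℚ_n` there is a finite solvable group
`G` and `χ ∈ Irr(G)` with `ℚ(χ) = F` and `χ(1) = [ℚ_n : F]`. -/
theorem stmt_12 (n : ℕ) (hn : 1 ≤ n) (F : IntermediateField ℚ ℂ)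
    (hF : F ≤ cyclotomicField' n) :
    ∃ χ : IrrChar, IsSolvable χ.carrier ∧ χ.rep.fieldOfValues = F ∧
      Module.finrank ℂ χ.rep = rdeg F (cyclotomicField' n) := by
  haveI : NeZero n := ⟨by omega⟩
  classical
  letI : DecidableEq ↥(Hgrp n F hF) := Classical.decEq _
  set tH : ↥(Hgrp n F hF) →* (ZMod n)ˣ := (tmap n).comp (Hgrp n F hF).subtype with htHdef
  have htH : Function.Injective tH := fun a b h => Subtype.ext (tmap_injective n h)
  set rep : FDRep ℂ (Gp tH) := FDRep.of (rho (zetaC n) (hzetaC n).pow_eq_one tH) with hrep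
  have hchar : ∀ g : Gp tH, rep.character g =
      if g.right = 1 then ((strc n F hF (Multiplicative.toAdd g.left) : cyclotomicField' n) : ℂ)
      else 0 := by
    intro g
    rw [hrep, character_rho (zetaC n) (hzetaC n).pow_eq_one tH g]
    by_cases hg : g.right = 1
    · rw [if_pos hg, if_pos hg, strc, AddSubmonoidClass.coe_finset_sum]
      refine Finset.sum_congr rfl fun τ _ => ?_
      exact bridge n F hF τ (Multiplicative.toAdd g.left)
    · rw [if_neg hg, if_neg hg]
  refine ⟨⟨Gp tH, rep, simple_rho (hzetaC n) tH htH⟩, solvable_Gp tH htH, ?_, ?_⟩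
  · -- field of values
    apply le_antisymm
    · rw [FDRep.fieldOfValues, IntermediateField.adjoin_le_iff]
      rintro x ⟨g, rfl⟩
      rw [hchar g]
      by_cases hg : g.right = 1
      · rw [if_pos hg]; exact val_strc_mem n F hF _
      · rw [if_neg hg]; exact zero_mem F
    · have h1 : F = IntermediateField.lift (Fk n F hF) :=
        (IntermediateField.lift_restrict hF).symm
      have h2 : IntermediateField.lift (Fk n F hF) =
          IntermediateField.adjoin ℚ
            (Subtype.val '' Set.range (strc n F hF)) := by
        rw [← adjoin_strc_eq n F hF]; exact IntermediateField.lift_adjoin (K := cyclotomicField' n) (S := Set.range (strc n F hF))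
      refine le_trans (le_of_eq (h1.trans h2)) ?_
      show IntermediateField.adjoin ℚ (Subtype.val '' Set.range (strc n F hF)) ≤
        IntermediateField.adjoin ℚ (Set.range rep.character)
      apply IntermediateField.adjoin.mono
      rintro x ⟨y, ⟨a, rfl⟩, rfl⟩
      refine ⟨SemidirectProduct.inl (Multiplicative.ofAdd a), ?_⟩
      rw [hchar]
      simp only [SemidirectProduct.right_inl, SemidirectProduct.left_inl, if_pos rfl, toAdd_ofAdd]
      rfl
  · -- degree
    have hdim : Module.finrank ℂ rep = Fintype.card ↥(Hgrp n F hF) := by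
      have : Module.finrank ℂ rep = Module.finrank ℂ (↥(Hgrp n F hF) → ℂ) := rfl
      rw [this, Module.finrank_pi]
    rw [hdim]
    have h3 := rdeg_eq n F hF
    rw [Nat.card_eq_fintype_card] at h3
    exact h3.symm
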